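/- Let K = HahnSeries ℝ ℂ be the field of generalized Laurent series with complex coefficients and real exponents, and for λ ∈ ℝ write s^λ ∈ K for the monomial HahnSeries.single λ 1 (so s = s¹). Let n and k be integers with 0 ≤ k ≤ n−1, and let λ be a real number with λ > 0 and λ ≥ (n−k−1)/(n+1). Then every nonzero z ∈ K satisfying z^{n−k}·(z + s^{−λ}·z^{n−k})^{k+1} = s has ord(z) = (1 + λ(k+1)) / ((n−k)(k+2)), where ord(z) denotes the smallest exponent in the support of z. -/

import Mathlib

open HahnSeries

/-- The field of generalized Laurent series with complex coefficients and real exponents. -/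
abbrev GenLaurent : Type := HahnSeries ℝ ℂ

/-- The monomial `s^λ`. -/
noncomputable def sPow (l : ℝ) : GenLaurent := HahnSeries.single l (1 : ℂ)

private lemma order_add_eq_left' {x y : GenLaurent} (hx : x ≠ 0)
    (h : x.order < y.order) : (x + y).order = x.order := by
  by_cases hy : y = 0
  · simp [hy]
  have ht : x.orderTop < y.orderTop := by
    rw [orderTop_of_ne_zero hx, orderTop_of_ne_zero hy, ← order_of_ne hx, ← order_of_ne hy]
    exact_mod_cast h
  have := orderTop_add_eq_left ht
  have hxy : x + y ≠ 0 := by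
    intro h0
    rw [h0, orderTop_zero, orderTop_of_ne_zero hx] at this
    exact WithTop.top_ne_coe this
  rw [orderTop_of_ne_zero hxy, orderTop_of_ne_zero hx, ← order_of_ne hxy, ← order_of_ne hx] at this
  exact_mod_cast this

/-- In the large-blowup regime `λ ≥ (n−k−1)/(n+1)`, every root of the cleared critical point
equation `z^{n−k}(z + s^{−λ} z^{n−k})^{k+1} = s` has order `(1 + λ(k+1))/((n−k)(k+2))`. -/
theorem order_of_root_single_slope (n k : ℕ) (hk : k ≤ n - 1) (hn : 1 ≤ n) (lam : ℝ)
    (hlam : 0 < lam) (hlam' : ((n : ℝ) - k - 1) / ((n : ℝ) + 1) ≤ lam) :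
    ∀ z : GenLaurent, z ≠ 0 →
      z ^ (n - k) * (z + sPow (-lam) * z ^ (n - k)) ^ (k + 1) = sPow 1 →
      z.order = (1 + lam * ((k : ℝ) + 1)) / (((n : ℝ) - k) * ((k : ℝ) + 2)) := by
  intro z hz heq
  set m : ℕ := n - k with hm
  have hkn : k < n := by omega
  have hm1 : 1 ≤ m := by omega
  set a : ℝ := z.order with ha
  set w : GenLaurent := z + sPow (-lam) * z ^ m with hw
  have hs1 : (sPow 1 : GenLaurent) ≠ 0 := single_ne_zero one_ne_zero
  have hwne : w ≠ 0 := by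
    intro h0
    rw [h0, zero_pow (Nat.succ_ne_zero k), mul_zero] at heq
    exact hs1 heq.symm
  have hzm : z ^ m ≠ 0 := pow_ne_zero _ hz
  have hsl : (sPow (-lam) : GenLaurent) ≠ 0 := single_ne_zero one_ne_zero
  -- order of the equation
  have hordeq : (m : ℝ) * a + ((k : ℝ) + 1) * w.order = 1 := by
    have := congrArg HahnSeries.order heq
    rw [order_mul hzm (pow_ne_zero _ hwne), order_pow, order_pow] at this
    rw [show (sPow 1 : GenLaurent).order = 1 from order_single one_ne_zero] at this
    rw [nsmul_eq_mul, nsmul_eq_mul] at this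
    push_cast at this
    linarith [this]
  have hordsz : (sPow (-lam) * z ^ m).order = -lam + (m : ℝ) * a := by
    rw [order_mul hsl hzm, order_pow, nsmul_eq_mul,
      show (sPow (-lam) : GenLaurent).order = -lam from order_single one_ne_zero]
  have hmcast : (m : ℝ) = (n : ℝ) - k := by
    rw [hm]; push_cast [Nat.cast_sub hkn.le]; ring
  have hkr : (k : ℝ) < n := by exact_mod_cast hkn
  have hnk0 : ((n : ℝ) - k) * ((k : ℝ) + 2) ≠ 0 := by
    have : 0 < ((n : ℝ) - k) * ((k : ℝ) + 2) := by nlinarith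
    exact ne_of_gt this
  have hm1c : (1 : ℝ) ≤ (n : ℝ) - k := by
    have : (1 : ℝ) ≤ (m : ℝ) := by exact_mod_cast hm1
    rw [hm] at this; push_cast [Nat.cast_sub hkn.le] at this; linarith
  have hn1 : (0 : ℝ) < (n : ℝ) + 1 := by positivity
  rcases lt_trichotomy a (-lam + (m : ℝ) * a) with hlt | heqo | hgt
  · -- impossible: gives a = 1/(n+1) and lam < (n-k-1)/(n+1)
    exfalso
    have hwo : w.order = a := by
      rw [hw, order_add_eq_left' hz]
      rw [hordsz]; exact hlt
    rw [hwo] at hordeq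
    -- a = 1/(n+1)
    have hma : (m : ℝ) ≥ 1 := by exact_mod_cast hm1
    have hdiv : ((n : ℝ) - k - 1) / ((n : ℝ) + 1) ≤ lam := hlam'
    rw [div_le_iff₀ hn1] at hdiv
    rw [hmcast] at hordeq hlt
    nlinarith [hordeq, hlt, hdiv]
  · -- equality case
    have hmin : a ≤ w.order := by
      have := min_order_le_order_add (x := z) (y := sPow (-lam) * z ^ m) (by rw [← hw]; exact hwne)
      rw [hordsz, ← heqo, min_self] at this
      exact this
    rw [div_le_iff₀ hn1] at hlam'
    rw [hmcast] at hordeq heqo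
    have hklt : (k : ℝ) + 1 > 0 := by positivity
    -- w.order = (1 - (n-k)a)/(k+1) ≥ a  ⟹  (n+1)a ≤ 1
    have h1 : ((n : ℝ) + 1) * a ≤ 1 := by nlinarith [hordeq, hmin]
    -- lam = (n-k-1)a
    have hlameq : lam = ((n : ℝ) - k - 1) * a := by linarith [heqo]
    have hnk1 : (0 : ℝ) ≤ (n : ℝ) - k - 1 := by linarith
    have ha0 : 0 < a := by
      by_contra hle
      push_neg at hle
      have : ((n : ℝ) - k - 1) * a ≤ 0 := mul_nonpos_of_nonneg_of_nonpos hnk1 hle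
      linarith
    have haeq : a = 1 / ((n : ℝ) + 1) := by
      have h2 : 1 ≤ ((n : ℝ) + 1) * a := by nlinarith
      field_simp
      linarith
    rw [haeq, eq_div_iff hnk0, hlameq, haeq]
    field_simp
    ring
  · -- generic case
    have hwo : w.order = -lam + (m : ℝ) * a := by
      rw [hw, add_comm z, order_add_eq_left' (mul_ne_zero hsl hzm)]
      · exact hordsz
      · rw [hordsz]; exact hgt
    rw [hwo, hmcast] at hordeq
    rw [eq_div_iff hnk0]
    linarith [hordeq]
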